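/- Let k be a positive even natural number and let D : (ZMod k → ZMod 2) → (ZMod k → ZMod 2) be the ℤ/2-linear map given by (D x)(j) = x(j-1) + x(j+1) when j is even and (D x)(j) = 0 when j is odd (parity of j ∈ ZMod k meaning parity of its canonical representative, which is well defined since k is even). Then the subspace of all x in the kernel of D that satisfy x(j) = 0 for every j with even canonical representative has dimension 1 over ZMod 2; it is spanned by the indicator vector of the odd-index positions. -/

import Mathlib

/-- The degree-0 part of the kernel of the combinatorial log Floer differential
(the elements of the kernel vanishing on all even-index coordinates) has
dimension 1 over `ℤ/2`, spanned by the indicator vector of the odd positions. -/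
theorem log_floer_degree_zero_kernel
    (k : ℕ) (hk : 0 < k) (hke : Even k)
    (D : (ZMod k → ZMod 2) →ₗ[ZMod 2] (ZMod k → ZMod 2))
    (hD : ∀ x : ZMod k → ZMod 2, ∀ j : ZMod k,
      D x j = if Even j.val then x (j - 1) + x (j + 1) else 0)
    (S : Submodule (ZMod 2) (ZMod k → ZMod 2))
    (hS : ∀ x : ZMod k → ZMod 2,
      x ∈ S ↔ (D x = 0 ∧ ∀ j : ZMod k, Even j.val → x j = 0)) :
    Module.finrank (ZMod 2) S = 1 ∧
      S = Submodule.span (ZMod 2)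
        {fun j : ZMod k => if Odd j.val then (1 : ZMod 2) else 0} := by
  haveI : NeZero k := ⟨hk.ne'⟩
  have hk2 : 1 < k := by
    rcases hke with ⟨m, rfl⟩; omega
  haveI : Fact (1 < k) := ⟨hk2⟩
  set v : ZMod k → ZMod 2 := fun j => if Odd j.val then (1 : ZMod 2) else 0 with hv
  -- parity mod k
  have hmod : ∀ a : ℕ, Even (a % k) ↔ Even a := by
    intro a
    conv_rhs => rw [← Nat.mod_add_div a k]
    rw [Nat.even_add]
    simp [hke.mul_right _]
  have hA : ∀ j : ZMod k, Even (j + 1).val ↔ ¬ Even j.val := by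
    intro j
    rw [ZMod.val_add, ZMod.val_one, hmod, Nat.even_add_one]
  have hsub : ∀ j : ZMod k, (j - 1) + 1 = j := by intro j; ring
  -- v ∈ S
  have hvS : v ∈ S := by
    rw [hS]
    constructor
    · funext j
      rw [hD]
      by_cases h : Even j.val
      · rw [if_pos h]
        have h1 : Odd (j - 1).val := by
          rw [← Nat.not_even_iff_odd]
          intro hc
          have := (hA (j - 1)).mp (by rw [hsub]; exact h)
          exact this hc
        have h2 : Odd (j + 1).val := by
          rw [← Nat.not_even_iff_odd]
          intro hc
          exact ((hA j).mp hc) h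
        simp [hv, h1, h2]
        decide
      · rw [if_neg h]; rfl
    · intro j hj
      simp only [hv]
      exact if_neg (Nat.not_odd_iff_even.mpr hj)
  have hval1 : (1 : ZMod k).val = 1 := ZMod.val_one k
  have hv1 : v 1 = 1 := by simp [hv, hval1]
  have hv0 : v ≠ 0 := by
    intro h
    have := congrFun h 1
    rw [hv1] at this
    exact one_ne_zero this
  -- every x ∈ S is x 1 • v
  have hrepr : ∀ x, x ∈ S → x = x 1 • v := by
    intro x hx
    rw [hS] at hx
    obtain ⟨hDx, hev⟩ := hx
    have key : ∀ m : ℕ, x (((2 * m + 1 : ℕ) : ZMod k)) = x 1 := by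
      intro m
      induction m with
      | zero => norm_num
      | succ n ih =>
        set j : ZMod k := ((2 * n + 1 : ℕ) : ZMod k) with hj
        have hjodd : Odd j.val := by
          rw [hj, ZMod.val_natCast, ← Nat.not_even_iff_odd, hmod]
          simp [Nat.even_add_one, parity_simps]
        have heven : Even (j + 1).val := (hA j).mpr (Nat.not_even_iff_odd.mpr hjodd)
        have h0 : x ((j+1) - 1) + x ((j+1) + 1) = 0 := by
          have := congrFun hDx (j + 1)
          rw [hD, if_pos heven] at this
          exact this
        have h0' : x j + x (j + 2) = 0 := by
          have e1 : (j + 1) - 1 = j := by ring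
          have e2 : (j + 1) + 1 = j + 2 := by ring
          rwa [e1, e2] at h0
        have hx2 : x (j + 2) = x j := by
          have : x (j + 2) = -(x j) := by linear_combination h0'
          rw [this]
          exact (CharTwo.neg_eq _)
        have : ((2 * (n + 1) + 1 : ℕ) : ZMod k) = j + 2 := by
          rw [hj]; push_cast; ring
        rw [this, hx2, ih]
    funext j
    by_cases h : Odd j.val
    · obtain ⟨m, hm⟩ := h
      have hodd : Odd j.val := ⟨m, hm⟩
      have hjc : ((j.val : ℕ) : ZMod k) = j := by
        simp [ZMod.natCast_val, ZMod.cast_id]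
      have hx1 : x j = x 1 := by
        have := key m
        rwa [← hm, hjc] at this
      simp only [hv, Pi.smul_apply]
      rw [if_pos hodd, smul_eq_mul, mul_one, hx1]
    · have hz : x j = 0 := hev j (Nat.not_odd_iff_even.mp h)
      simp [hv, h, hz]
  have hSspan : S = Submodule.span (ZMod 2) {v} := by
    apply le_antisymm
    · intro x hx
      rw [Submodule.mem_span_singleton]
      exact ⟨x 1, (hrepr x hx).symm⟩
    · rw [Submodule.span_le, Set.singleton_subset_iff]
      exact hvS
  refine ⟨?_, hSspan⟩
  rw [hSspan, finrank_span_singleton hv0]
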